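/- For every integer n ≥ 1, the sum over j from 2 to n of (j/n)^{(j-2)/4} is at most 15 (interpreting the empty sum as 0 when n = 1). -/

import Mathlib

open Finset Real

private lemma geom_range_le {r : ℝ} (h0 : 0 ≤ r) (h1 : r < 1) (m : ℕ) :
    ∑ i ∈ Finset.range m, r ^ i ≤ 1 / (1 - r) := by
  calc ∑ i ∈ Finset.range m, r ^ i
      ≤ ∑' i : ℕ, r ^ i :=
        Summable.sum_le_tsum _ (fun i _ => by positivity) (summable_geometric_of_lt_one h0 h1)
    _ = (1 - r)⁻¹ := tsum_geometric_of_lt_one h0 h1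
    _ = 1 / (1 - r) := (one_div _).symm

private lemma pointwise_base {n j : ℕ} (hj2 : 2 ≤ j) {c d : ℝ}
    (hc : (j:ℝ)/n ≤ c) (hd : c ≤ d^(4:ℕ)) (hd0 : 0 ≤ d) :
    ((j:ℝ)/n) ^ (((j:ℝ)-2)/4) ≤ d ^ (j - 2) := by
  have hb0 : (0:ℝ) ≤ (j:ℝ)/n := by positivity
  have he0 : (0:ℝ) ≤ ((j:ℝ)-2)/4 := by
    have : (2:ℝ) ≤ j := by exact_mod_cast hj2
    linarith
  calc ((j:ℝ)/n) ^ (((j:ℝ)-2)/4)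
      ≤ (d^(4:ℕ)) ^ (((j:ℝ)-2)/4) := Real.rpow_le_rpow hb0 (hc.trans hd) he0
    _ = d ^ (j - 2) := by
        rw [← Real.rpow_natCast d 4, ← Real.rpow_mul hd0, ← Real.rpow_natCast d (j-2)]
        congr 1
        have : ((j - 2 : ℕ) : ℝ) = (j:ℝ) - 2 := by push_cast [hj2]; ring
        rw [this]; ring

private lemma pointwise_C {n j : ℕ} (hj2 : 2 ≤ j) (hjn : j ≤ n) (hn : 64 ≤ n)
    (h7 : 7*n < 10*j) :
    ((j:ℝ)/n) ^ (((j:ℝ)-2)/4) ≤ (2560/2989:ℝ) ^ (n - j) := by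
  have hnR : (64:ℝ) ≤ n := by exact_mod_cast hn
  have hn0' : (0:ℝ) < n := by linarith
  have hjR : (7:ℝ)*n + 1 ≤ 10*j := by exact_mod_cast h7
  have hjnR : (j:ℝ) ≤ n := by exact_mod_cast hjn
  have hj2R : (2:ℝ) ≤ j := by exact_mod_cast hj2
  have he0 : (0:ℝ) ≤ ((j:ℝ)-2)/4 := by linarith
  have ha : (0:ℝ) ≤ (n:ℝ) - j := by linarith
  have step1 : (j:ℝ)/n ≤ Real.exp (-(((n:ℝ)-j)/n)) := by
    have h := Real.add_one_le_exp (-(((n:ℝ)-j)/n))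
    have heq : (j:ℝ)/n = -(((n:ℝ)-j)/n) + 1 := by field_simp; ring
    rw [heq]; exact h
  calc ((j:ℝ)/n) ^ (((j:ℝ)-2)/4)
      ≤ (Real.exp (-(((n:ℝ)-j)/n))) ^ (((j:ℝ)-2)/4) :=
        Real.rpow_le_rpow (by positivity) step1 he0
    _ = Real.exp (-(((n:ℝ)-j)/n) * (((j:ℝ)-2)/4)) := (Real.exp_mul _ _).symm
    _ ≤ Real.exp (((n - j : ℕ):ℝ) * (-(429/2560))) := by
        rw [Real.exp_le_exp]
        have hc : ((n - j : ℕ):ℝ) = (n:ℝ) - j := by push_cast [hjn]; ring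
        rw [hc, mul_neg, neg_mul, neg_le_neg_iff, div_mul_div_comm,
          le_div_iff₀ (by positivity : (0:ℝ) < (n:ℝ)*4)]
        have key : (0:ℝ) ≤ 2560*((j:ℝ)-2) - 1716*n := by linarith
        nlinarith [mul_nonneg ha key]
    _ = (Real.exp (-(429/2560))) ^ (n - j) := Real.exp_nat_mul _ _
    _ ≤ (2560/2989:ℝ) ^ (n - j) := by
        apply pow_le_pow_left₀ (Real.exp_nonneg _)
        have h := Real.add_one_le_exp (429/2560:ℝ)
        rw [Real.exp_neg]
        calc (Real.exp (429/2560))⁻¹ ≤ ((429:ℝ)/2560 + 1)⁻¹ :=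
              inv_anti₀ (by norm_num) h
          _ = 2560/2989 := by norm_num

private lemma main_case (n : ℕ) (hn : 64 ≤ n) :
    ∑ j ∈ Finset.Icc 2 n, ((j : ℝ) / (n : ℝ)) ^ (((j : ℝ) - 2) / 4) ≤ 15 := by
  have hn0 : 0 < n := by omega
  have hn0' : (0:ℝ) < n := by exact_mod_cast hn0
  set f : ℕ → ℝ := fun j => ((j : ℝ) / (n : ℝ)) ^ (((j : ℝ) - 2) / 4) with hf
  set sA := (Finset.Icc 2 n).filter (fun j => 2*j ≤ n) with hsA
  set s1 := (Finset.Icc 2 n).filter (fun j => ¬ 2*j ≤ n) with hs1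
  set sB := s1.filter (fun j => 10*j ≤ 7*n) with hsB
  set sC := s1.filter (fun j => ¬ 10*j ≤ 7*n) with hsC
  -- region A : 2j ≤ n
  have hA : ∑ j ∈ sA, f j ≤ 1/(1 - 841/1000) := by
    calc ∑ j ∈ sA, f j
        ≤ ∑ j ∈ sA, (841/1000:ℝ)^(j-2) := by
          apply Finset.sum_le_sum
          intro j hj
          simp only [hsA, Finset.mem_filter, Finset.mem_Icc] at hj
          obtain ⟨⟨hj2, hjn⟩, hjh⟩ := hj
          apply pointwise_base hj2 (c := 1/2) _ (by norm_num) (by norm_num)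
          rw [div_le_div_iff₀ hn0' (by norm_num)]
          have : (2:ℝ)*j ≤ n := by exact_mod_cast hjh
          linarith
      _ ≤ ∑ j ∈ Finset.Icc 2 n, (841/1000:ℝ)^(j-2) := by
          apply Finset.sum_le_sum_of_subset_of_nonneg (Finset.filter_subset _ _)
          intro j _ _; positivity
      _ ≤ 1/(1 - 841/1000) := by
          rw [← Finset.Ico_add_one_right_eq_Icc, Finset.sum_Ico_eq_sum_range]
          have : ∀ i, (841/1000:ℝ)^(2+i-2) = (841/1000:ℝ)^i := by
            intro i; congr 1; omega
          rw [Finset.sum_congr rfl (fun i _ => this i)]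
          exact geom_range_le (by norm_num) (by norm_num) _
  -- region B : n < 2j, 10j ≤ 7n
  have hB : ∑ j ∈ sB, f j ≤ (9147/10000:ℝ)^(31:ℕ) * (1/(1 - 9147/10000)) := by
    calc ∑ j ∈ sB, f j
        ≤ ∑ j ∈ sB, (9147/10000:ℝ)^(j-2) := by
          apply Finset.sum_le_sum
          intro j hj
          simp only [hsB, hs1, Finset.mem_filter, Finset.mem_Icc] at hj
          obtain ⟨⟨⟨hj2, hjn⟩, _⟩, hjh⟩ := hj
          apply pointwise_base hj2 (c := 7/10) _ (by norm_num) (by norm_num)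
          rw [div_le_div_iff₀ hn0' (by norm_num)]
          have : (10:ℝ)*j ≤ 7*n := by exact_mod_cast hjh
          linarith
      _ ≤ ∑ j ∈ Finset.Icc (n/2+1) n, (9147/10000:ℝ)^(j-2) := by
          apply Finset.sum_le_sum_of_subset_of_nonneg
          · intro j hj
            simp only [hsB, hs1, Finset.mem_filter, Finset.mem_Icc] at hj ⊢
            omega
          · intro j _ _; positivity
      _ ≤ (9147/10000:ℝ)^(31:ℕ) * (1/(1 - 9147/10000)) := by
          rw [← Finset.Ico_add_one_right_eq_Icc, Finset.sum_Ico_eq_sum_range]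
          have : ∀ i, (9147/10000:ℝ)^(n/2+1+i-2) = (9147/10000:ℝ)^(n/2-1) * (9147/10000:ℝ)^i := by
            intro i
            rw [← pow_add]
            congr 1
            omega
          rw [Finset.sum_congr rfl (fun i _ => this i), ← Finset.mul_sum]
          apply mul_le_mul
          · apply pow_le_pow_of_le_one (by norm_num) (by norm_num)
            omega
          · exact geom_range_le (by norm_num) (by norm_num) _
          · apply Finset.sum_nonneg; intro i _; positivity
          · positivity
  -- region C : 7n < 10j
  have hC : ∑ j ∈ sC, f j ≤ 1/(1 - 2560/2989) := by
    calc ∑ j ∈ sC, f j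
        ≤ ∑ j ∈ sC, (2560/2989:ℝ)^(n-j) := by
          apply Finset.sum_le_sum
          intro j hj
          simp only [hsC, hs1, Finset.mem_filter, Finset.mem_Icc] at hj
          obtain ⟨⟨⟨hj2, hjn⟩, _⟩, hjh⟩ := hj
          exact pointwise_C hj2 hjn hn (by omega)
      _ ≤ ∑ j ∈ Finset.Icc 2 n, (2560/2989:ℝ)^(n-j) := by
          apply Finset.sum_le_sum_of_subset_of_nonneg
          · intro j hj
            simp only [hsC, hs1, Finset.mem_filter, Finset.mem_Icc] at hj ⊢
            omega
          · intro j _ _; positivity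
      _ ≤ 1/(1 - 2560/2989) := by
          rw [← Finset.Ico_add_one_right_eq_Icc, Finset.sum_Ico_eq_sum_range]
          have h1 : n + 1 - 2 = n - 1 := by omega
          rw [h1]
          have : ∀ i ∈ Finset.range (n-1), (2560/2989:ℝ)^(n-(2+i)) =
              (fun k => (2560/2989:ℝ)^k) (n-1-1-i) := by
            intro i hi
            simp only
            congr 1
            simp only [Finset.mem_range] at hi
            omega
          rw [Finset.sum_congr rfl this, Finset.sum_range_reflect]
          exact geom_range_le (by norm_num) (by norm_num) _
  have hsplit := Finset.sum_filter_add_sum_filter_not (Finset.Icc 2 n)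
    (fun j => 2*j ≤ n) f
  have hsplit2 := Finset.sum_filter_add_sum_filter_not s1 (fun j => 10*j ≤ 7*n) f
  have htotal : ∑ j ∈ Finset.Icc 2 n, f j ≤
      1/(1 - 841/1000) + ((9147/10000:ℝ)^(31:ℕ) * (1/(1 - 9147/10000)) + 1/(1 - 2560/2989)) := by
    rw [← hsplit, ← hsplit2]
    exact add_le_add hA (add_le_add hB hC)
  refine htotal.trans ?_
  norm_num
set_option maxHeartbeats 2000000 in
private lemma finite_case (n : ℕ) (hn1 : 1 ≤ n) (hn : n ≤ 63) :
    ∑ j ∈ Finset.Icc 2 n, ((j:ℝ)/n) ^ (((j:ℝ)-2)/4) ≤ 15 := by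
  have hn0' : (0:ℝ) < n := by exact_mod_cast hn1
  have key : ∑ j ∈ Finset.Icc 2 n, ((j:ℝ)/n) ^ (((j:ℝ)-2)/4)
      ≤ ∑ j ∈ Finset.Icc 2 n, ((j:ℝ)/n) ^ ((j-2)/4 : ℕ) := by
    apply Finset.sum_le_sum
    intro j hj
    simp only [Finset.mem_Icc] at hj
    obtain ⟨hj2, hjn⟩ := hj
    have hj2R : (2:ℝ) ≤ j := by exact_mod_cast hj2
    have hb1 : (j:ℝ)/n ≤ 1 := by
      rw [div_le_one hn0']; exact_mod_cast hjn
    have hb0 : (0:ℝ) < (j:ℝ)/n := by positivity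
    rw [← Real.rpow_natCast ((j:ℝ)/n) ((j-2)/4)]
    apply Real.rpow_le_rpow_of_exponent_ge hb0 hb1
    calc (((j-2)/4 : ℕ):ℝ) ≤ ((j-2:ℕ):ℝ)/4 := Nat.cast_div_le
      _ = ((j:ℝ)-2)/4 := by
          congr 1
          push_cast [hj2]; ring
  refine le_trans key ?_
  interval_cases n <;> norm_num [Finset.sum_Icc_succ_top]

theorem sum_ratio_pow_le (n : ℕ) (hn : 1 ≤ n) :
    ∑ j ∈ Finset.Icc 2 n, ((j : ℝ) / (n : ℝ)) ^ (((j : ℝ) - 2) / 4) ≤ 15 := by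
  rcases le_or_gt n 63 with h | h
  · exact finite_case n hn h
  · exact main_case n (by omega)
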